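/- Let ψ : ℝ → ℝ be differentiable with ψ(θ + 2π) = ψ(θ) for all θ, and let c ∈ ℝ. If c·ψ(θ) + ψ'(θ) ≠ 0 for all θ ∈ ℝ, then c ≠ 0 and ψ(θ) ≠ 0 for all θ ∈ ℝ. -/

import Mathlib

/-- If ψ is a differentiable 2π-periodic function and
`c·ψ + ψ' ≠ 0` everywhere, then `c ≠ 0` and `ψ` never vanishes. -/
theorem stmt_12 (ψ : ℝ → ℝ) (hψ : Differentiable ℝ ψ)
    (hper : ∀ θ : ℝ, ψ (θ + 2 * Real.pi) = ψ θ) (c : ℝ)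
    (h : ∀ θ : ℝ, c * ψ θ + deriv ψ θ ≠ 0) :
    c ≠ 0 ∧ ∀ θ : ℝ, ψ θ ≠ 0 := by
  have hpi : (0:ℝ) < 2 * Real.pi := by positivity
  constructor
  · intro hc
    subst hc
    obtain ⟨ξ, _, hξ⟩ := exists_deriv_eq_zero (f := ψ) (a := 0) (b := 2 * Real.pi)
      hpi hψ.continuous.continuousOn (by simpa using (hper 0).symm)
    exact h ξ (by simp [hξ])
  · intro θ₀ h0
    set g : ℝ → ℝ := fun θ => Real.exp (c * θ) * ψ θ with hg
    have hgd : ∀ θ, HasDerivAt g (Real.exp (c * θ) * (c * ψ θ + deriv ψ θ)) θ := by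
      intro θ
      have h1 : HasDerivAt (fun θ => Real.exp (c * θ)) (c * Real.exp (c * θ)) θ := by
        simpa [mul_comm, Function.comp_def] using
          (Real.hasDerivAt_exp (c * θ)).comp θ ((hasDerivAt_id θ).const_mul c)
      have := h1.mul (hψ θ).hasDerivAt
      refine this.congr_deriv ?_
      ring
    have hgc : Continuous g := by
      exact (Real.continuous_exp.comp (continuous_const.mul continuous_id)).mul hψ.continuous
    obtain ⟨ξ, _, hξ⟩ := exists_deriv_eq_zero (f := g) (a := θ₀) (b := θ₀ + 2 * Real.pi)
      (by linarith) hgc.continuousOn (by simp [hg, hper θ₀, h0])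
    rw [(hgd ξ).deriv] at hξ
    rcases mul_eq_zero.1 hξ with h1 | h2
    · exact (Real.exp_ne_zero _) h1
    · exact h ξ h2
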